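/- With the hypotheses in the context, for every (a, b) ∈ G with a ≠ b there exists a τ-open set S ⊆ G containing (a, b) such that both π₁ and π₂ are injective on S and π₁ '' S ∩ π₂ '' S = ∅. -/

import Mathlib

/-- Let `X` be a Hausdorff space, `R` an equivalence relation on `X`, and let
`G = {(a, b) | R a b}` carry a topology `τ` making both coordinate projections continuous, and
such that every point of `G` has a `τ`-open neighborhood on which both projections are injective
(an open `G`-set).  Then every `(a, b) ∈ G` with `a ≠ b` lies in an open `G`-set `S` with
`π₁ '' S ∩ π₂ '' S = ∅`. -/
theorem exists_open_Gset_disjoint_source_range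
    {X : Type*} [tX : TopologicalSpace X] [T2Space X]
    (R : X → X → Prop) (hR : Equivalence R)
    (τ : TopologicalSpace {x : X × X // R x.1 x.2})
    (hc1 : @Continuous _ _ τ tX fun g : {x : X × X // R x.1 x.2} => g.1.1)
    (hc2 : @Continuous _ _ τ tX fun g : {x : X × X // R x.1 x.2} => g.1.2)
    (hGsets : ∀ g : {x : X × X // R x.1 x.2},
      ∃ S : Set {x : X × X // R x.1 x.2}, @IsOpen _ τ S ∧ g ∈ S ∧
        Set.InjOn (fun g : {x : X × X // R x.1 x.2} => g.1.1) S ∧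
        Set.InjOn (fun g : {x : X × X // R x.1 x.2} => g.1.2) S)
    (g : {x : X × X // R x.1 x.2}) (hg : g.1.1 ≠ g.1.2) :
    ∃ S : Set {x : X × X // R x.1 x.2}, @IsOpen _ τ S ∧ g ∈ S ∧
      Set.InjOn (fun g : {x : X × X // R x.1 x.2} => g.1.1) S ∧
      Set.InjOn (fun g : {x : X × X // R x.1 x.2} => g.1.2) S ∧
      ((fun g : {x : X × X // R x.1 x.2} => g.1.1) '' S) ∩
        ((fun g : {x : X × X // R x.1 x.2} => g.1.2) '' S) = ∅ := by
  obtain ⟨U, V, hU, hV, haU, hbV, hUV⟩ := t2_separation hg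
  obtain ⟨S₀, hS₀o, hgS₀, hinj1, hinj2⟩ := hGsets g
  refine ⟨S₀ ∩ ((fun g : {x : X × X // R x.1 x.2} => g.1.1) ⁻¹' U) ∩
      ((fun g : {x : X × X // R x.1 x.2} => g.1.2) ⁻¹' V),
    (hS₀o.inter (hU.preimage hc1)).inter (hV.preimage hc2),
    ⟨⟨hgS₀, haU⟩, hbV⟩,
    hinj1.mono (by intro x hx; exact hx.1.1),
    hinj2.mono (by intro x hx; exact hx.1.1), ?_⟩
  apply Set.eq_empty_of_forall_notMem
  rintro x ⟨⟨p, hp, rfl⟩, ⟨q, hq, hqx⟩⟩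
  exact Set.disjoint_left.mp hUV hp.1.2 (hqx ▸ hq.2)
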